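/- The renormalization equation holds for substochastic kernels: for substochastic kernels f : X → DMY and g : Y → DMZ, normalizing the composite f;g equals normalizing the composite of the normalization of f with g: n(f;g) = n(n(f)•;g), where n(f)• denotes the inclusion of the normalized kernel back into substochastic kernels. -/

import Mathlib

open scoped NNReal

/-- A substochastic kernel: each input yields a subdistribution. -/
def IsSubstochastic {X Y : Type*} [Fintype Y] (f : X → Y → ℝ≥0) : Prop :=
  ∀ x, ∑ y, f x y ≤ 1

/-- Composition of substochastic kernels. -/
def scomp {X Y Z : Type*} [Fintype Y] (f : X → Y → ℝ≥0) (g : Y → Z → ℝ≥0) :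
    X → Z → ℝ≥0 := fun x z => ∑ y, f x y * g y z

open scoped Classical in
/-- Normalization of a substochastic kernel: at each input, the normalized
distribution, or failure when the total mass is zero. -/
noncomputable def norm {X Y : Type*} [Fintype Y] (f : X → Y → ℝ≥0) :
    X → Option (Y → ℝ≥0) := fun x =>
  if (∑ y, f x y) = 0 then none else some (fun y => f x y / ∑ y', f x y')

/-- Inclusion of the normalization back into substochastic kernels:
failure becomes the zero subdistribution. -/
noncomputable def normIncl {X Y : Type*} [Fintype Y] (f : X → Y → ℝ≥0) :
    X → Y → ℝ≥0 := fun x y => ((norm f) x).elim 0 (fun d => d y)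

/-- The renormalization equation: `n(f;g) = n(n(f)•; g)`. -/
theorem renormalization {X Y Z : Type*} [Fintype Y] [Fintype Z]
    (f : X → Y → ℝ≥0) (g : Y → Z → ℝ≥0)
    (hf : IsSubstochastic f) (hg : IsSubstochastic g) :
    norm (scomp f g) = norm (scomp (normIncl f) g) := by
  classical
  funext x
  by_cases hS : (∑ y, f x y) = 0
  · have hz : ∀ y, f x y = 0 := by
      intro y
      exact (Finset.sum_eq_zero_iff.mp hS) y (Finset.mem_univ y)
    have h1 : ∀ z, scomp f g x z = 0 := by
      intro z; simp [scomp, hz]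
    have hincl : ∀ y, normIncl f x y = 0 := by
      intro y; simp [normIncl, _root_.norm, hS]
    have h2 : ∀ z, scomp (normIncl f) g x z = 0 := by
      intro z; simp [scomp, hincl]
    simp [_root_.norm, h1, h2]
  · set S := ∑ y, f x y with hSdef
    have hincl : ∀ y, normIncl f x y = f x y / S := by
      intro y; simp only [normIncl, _root_.norm]; rw [if_neg hS]; rfl
    have hcomp : ∀ z, scomp (normIncl f) g x z = scomp f g x z / S := by
      intro z
      simp only [scomp, hincl, div_eq_mul_inv, Finset.sum_mul]
      congr 1; funext y; ring
    have hsum : (∑ z, scomp (normIncl f) g x z) = (∑ z, scomp f g x z) / S := by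
      simp only [hcomp, div_eq_mul_inv, Finset.sum_mul]
    by_cases hT : (∑ z, scomp f g x z) = 0
    · have hT' : (∑ z, scomp (normIncl f) g x z) = 0 := by
        simp [hsum, hT]
      simp [_root_.norm, hT, hT']
    · have hT' : (∑ z, scomp (normIncl f) g x z) ≠ 0 := by
        simp only [hsum, div_eq_mul_inv, ne_eq, mul_eq_zero, inv_eq_zero]
        push_neg; exact ⟨hT, hS⟩
      simp only [_root_.norm, hT, hT', if_neg, if_false]
      congr 1
      funext z
      rw [hcomp, hsum, div_div_div_cancel_right₀ hS]
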